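/- For the Pearson-χ² f-GAN with f^c(T) = T²/4 + T and identity activation, the pointwise optimality condition ∂f^c/∂T = (γ⁺p⁺ − γ⁻p⁻)/g gives T* = 2((γ⁺p⁺ − γ⁻p⁻ − g)/g), and the condition f^c(T*) = λ implies g = (γ⁺p⁺ − γ⁻p⁻)/√(λ+1), assuming λ > −1 and γ⁺p⁺ − γ⁻p⁻ > 0. -/
import Mathlib


open Real

theorem stmt_13 (gp gm pp pm g lam : ℝ) (hnum : 0 < gp * pp - gm * pm) (hg : 0 < g)
    (hlam : -1 < lam)
    (Tstar : ℝ) (hT : Tstar = 2 * ((gp * pp - gm * pm - g) / g)) :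
    HasDerivAt (fun T : ℝ => T ^ 2 / 4 + T) ((gp * pp - gm * pm) / g) Tstar ∧
      (Tstar ^ 2 / 4 + Tstar = lam → g = (gp * pp - gm * pm) / Real.sqrt (lam + 1)) := by
  set A := gp * pp - gm * pm with hA
  constructor
  · have h1 : HasDerivAt (fun T : ℝ => T ^ 2 / 4 + T)
        (2 * Tstar ^ 1 / 4 + 1) Tstar :=
      ((hasDerivAt_pow 2 Tstar).div_const 4).add (hasDerivAt_id Tstar)
    convert h1 using 1
    rw [hT]
    field_simp
    ring
  · intro heq
    have hx : (A / g) ^ 2 = lam + 1 := by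
      rw [hT] at heq
      field_simp at heq ⊢
      nlinarith [heq]
    have hxpos : 0 < A / g := div_pos hnum hg
    have hs : Real.sqrt (lam + 1) = A / g := by
      rw [← hx, Real.sqrt_sq hxpos.le]
    rw [hs]
    field_simp
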